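/- Let P_1,…,P_n be σ^∨-closed polyhedra with face data {(g_τ,M_τ)}_{τ∈𝒮_i}, let 𝐝 ∈ ℤ^d with 𝟎 ≠ −𝐝 ∈ S, and set f(𝐚) = Σ_{i=1}^n ∏_{τ∈𝒮_i} (g_τ(𝐚), ⌈M_τ − g_τ(𝐝)⌉ − 1)!. Then for 𝐚 ∈ S: f(𝐚) ≠ 0 if and only if 𝐚 + 𝐝 ∈ ⋃_i P_i. -/
import Mathlib

lemma desc_prod_nonneg (x : ℤ) (hx : 0 ≤ x) (N : ℕ) :
    0 ≤ ∏ k ∈ Finset.range N, (x - (k : ℤ)) := by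
  rcases le_or_gt (N : ℤ) x with hle | hlt
  · exact le_of_lt (Finset.prod_pos (fun k hk => by
      simp only [Finset.mem_range] at hk
      omega))
  · have : x.toNat ∈ Finset.range N := by
      simp only [Finset.mem_range]; omega
    rw [Finset.prod_eq_zero this (by omega)]

lemma desc_prod_pos_iff (x : ℤ) (hx : 0 ≤ x) (N : ℕ) :
    0 < ∏ k ∈ Finset.range N, (x - (k : ℤ)) ↔ (N : ℤ) ≤ x := by
  constructor
  · intro hp
    by_contra hlt
    push_neg at hlt
    have hm : x.toNat ∈ Finset.range N := by
      simp only [Finset.mem_range]; omega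
    rw [Finset.prod_eq_zero hm (by omega)] at hp
    exact lt_irrefl 0 hp
  · intro hle
    exact Finset.prod_pos (fun k hk => by
      simp only [Finset.mem_range] at hk
      omega)

/-- for σ∨-closed polyhedra P_1, ..., P_n with face data, 0 ≠ -d ∈ S,
and f(a) = Σ_i ∏_τ (g_τ(a), ⌈M_τ - g_τ(d)⌉ - 1)!, one has for a ∈ S that
f(a) ≠ 0 iff a + d ∈ ⋃_i P_i. -/
theorem membership_by_operator (d m n : ℕ)
    (h : Fin m → ((Fin d → ℤ) →ₗ[ℤ] ℤ))
    (S : Set (Fin d → ℤ)) (hS : ∀ a, a ∈ S ↔ ∀ i, 0 ≤ h i a)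
    (ι : Fin n → Type) [∀ i, Fintype (ι i)]
    (g : ∀ i, ι i → ((Fin d → ℤ) →ₗ[ℤ] ℤ)) (M : ∀ i, ι i → ℚ)
    (P : Fin n → Set (Fin d → ℤ))
    (hface : ∀ i v, v ∈ P i ↔ ∀ τ, M i τ ≤ ((g i τ v : ℤ) : ℚ))
    (hgpos : ∀ i τ, ∀ b ∈ S, 0 ≤ g i τ b)
    (dv : Fin d → ℤ) (hd0 : dv ≠ 0) (hdS : -dv ∈ S)
    (a : Fin d → ℤ) (ha : a ∈ S) :
    (∑ i, ∏ τ, ∏ k ∈ Finset.range (⌈M i τ - ((g i τ dv : ℤ) : ℚ)⌉).toNat,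
        (g i τ a - (k : ℤ))) ≠ 0 ↔
      a + dv ∈ ⋃ i, P i := by
  have hga : ∀ i τ, 0 ≤ g i τ a := fun i τ => hgpos i τ a ha
  -- term positivity characterization
  have key : ∀ i : Fin n,
      (∏ τ, ∏ k ∈ Finset.range (⌈M i τ - ((g i τ dv : ℤ) : ℚ)⌉).toNat,
        (g i τ a - (k : ℤ))) ≠ 0 ↔ a + dv ∈ P i := by
    intro i
    rw [hface]
    constructor
    · intro hne τ
      have hτ : (∏ k ∈ Finset.range (⌈M i τ - ((g i τ dv : ℤ) : ℚ)⌉).toNat,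
          (g i τ a - (k : ℤ))) ≠ 0 := by
        intro hz
        exact hne (Finset.prod_eq_zero (Finset.mem_univ τ) hz)
      have hpos := lt_of_le_of_ne (desc_prod_nonneg _ (hga i τ) _) (Ne.symm hτ)
      rw [desc_prod_pos_iff _ (hga i τ)] at hpos
      have hceil : ⌈M i τ - ((g i τ dv : ℤ) : ℚ)⌉ ≤ g i τ a := by
        have := Int.toNat_of_nonneg (le_trans (Int.ofNat_zero_le _) hpos)
        omega
      have := (Int.ceil_le).mp hceil
      push_cast at this
      have hlin : g i τ (a + dv) = g i τ a + g i τ dv := map_add _ _ _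
      rw [hlin]; push_cast; linarith
    · intro hmem
      apply Finset.prod_ne_zero_iff.mpr
      intro τ _
      have hmτ := hmem τ
      have hlin : g i τ (a + dv) = g i τ a + g i τ dv := map_add _ _ _
      rw [hlin] at hmτ
      have hceil : ⌈M i τ - ((g i τ dv : ℤ) : ℚ)⌉ ≤ g i τ a := by
        apply Int.ceil_le.mpr
        push_cast at hmτ ⊢
        linarith
      have hN : ((⌈M i τ - ((g i τ dv : ℤ) : ℚ)⌉).toNat : ℤ) ≤ g i τ a := by
        have := hga i τ; omega
      exact ne_of_gt ((desc_prod_pos_iff _ (hga i τ) _).mpr hN)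
  have hterm_nonneg : ∀ i : Fin n, 0 ≤ ∏ τ, ∏ k ∈ Finset.range
      (⌈M i τ - ((g i τ dv : ℤ) : ℚ)⌉).toNat, (g i τ a - (k : ℤ)) :=
    fun i => Finset.prod_nonneg (fun τ _ => desc_prod_nonneg _ (hga i τ) _)
  constructor
  · intro hne
    have : ∃ i : Fin n, (∏ τ, ∏ k ∈ Finset.range
        (⌈M i τ - ((g i τ dv : ℤ) : ℚ)⌉).toNat, (g i τ a - (k : ℤ))) ≠ 0 := by
      by_contra hall
      push_neg at hall
      exact hne (Finset.sum_eq_zero (fun i _ => hall i))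
    obtain ⟨i, hi⟩ := this
    exact Set.mem_iUnion.mpr ⟨i, (key i).mp hi⟩
  · intro hmem
    obtain ⟨i, hi⟩ := Set.mem_iUnion.mp hmem
    have hi' := (key i).mpr hi
    have hipos := lt_of_le_of_ne (hterm_nonneg i) (Ne.symm hi')
    have : 0 < ∑ i, ∏ τ, ∏ k ∈ Finset.range
        (⌈M i τ - ((g i τ dv : ℤ) : ℚ)⌉).toNat, (g i τ a - (k : ℤ)) :=
      Finset.sum_pos' (fun j _ => hterm_nonneg j) ⟨i, Finset.mem_univ i, hipos⟩
    exact ne_of_gt this
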